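/- Let X = (X, d_X, μ) and Y = (Y, d_Y, ν) be metric measure spaces, Δ a distance on [0,∞), λ : [0,∞) → [0,∞] a cost and φ an entropy function with reverse entropy ψ. For any finite positive Borel measure π on X × Y with marginals π₁, π₂, write the Lebesgue decompositions μ = f·π₁ + μ⊥ and ν = g·π₂ + ν⊥ (so f = dμ/dπ₁, g = dν/dπ₂). Then L(π) = ∬ L_{λ(Γ(x,x',y,y'))}( f(x)·f(x'), g(y)·g(y') ) dπ(x,y) dπ(x',y') + ψ'_∞·( |(μ⊗μ)⊥| + |(ν⊗ν)⊥| ), where (μ⊗μ)⊥ denotes the singular part of μ⊗μ with respect to π₁⊗π₁, (ν⊗ν)⊥ the singular part of ν⊗ν with respect to π₂⊗π₂, and |σ| the total mass of σ. -/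

import Mathlib

open MeasureTheory ENNReal NNReal

noncomputable section

/-- The recession constant `φ'_∞ = lim_{r → ∞} φ(r)/r` of an entropy function. -/
def recessionConst (φ : ℝ≥0 → ℝ≥0∞) : ℝ≥0∞ :=
  Filter.limsup (fun r : ℝ≥0 => φ r / (r : ℝ≥0∞)) Filter.atTop

/-- An entropy function: convex, lower semicontinuous, `φ 1 = 0`. -/
def IsEntropy (φ : ℝ≥0 → ℝ≥0∞) : Prop :=
  ConvexOn ℝ≥0 Set.univ φ ∧ LowerSemicontinuous φ ∧ φ 1 = 0

/-- The Csiszár divergence `D_φ(μ|ν) = ∫ φ(dμ/dν) dν + φ'_∞ · μ⊥(X)`. -/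
def csiszarDiv {α : Type*} [MeasurableSpace α] (φ : ℝ≥0 → ℝ≥0∞) (μ ν : Measure α) : ℝ≥0∞ :=
  (∫⁻ x, φ (μ.rnDeriv ν x).toNNReal ∂ν) + recessionConst φ * μ.singularPart ν Set.univ

/-- The reverse entropy `ψ(r) = r·φ(1/r)` for `r > 0`, with `ψ(0) = φ'_∞`. -/
def reverseEnt (φ : ℝ≥0 → ℝ≥0∞) (r : ℝ≥0) : ℝ≥0∞ :=
  if r = 0 then recessionConst φ else (r : ℝ≥0∞) * φ r⁻¹

/-- The cost `L_c(r,s) = c + ψ(r) + ψ(s)`. -/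
def Lcost (φ : ℝ≥0 → ℝ≥0∞) (c : ℝ≥0∞) (r s : ℝ≥0) : ℝ≥0∞ :=
  c + reverseEnt φ r + reverseEnt φ s

/-- The Gromov--Wasserstein integrand `λ(Γ(x,x',y,y')) = λ(Δ(d_X(x,x'), d_Y(y,y')))`
on pairs `((x,y),(x',y'))`. -/
def gwCost {X Y : Type*} [MetricSpace X] [MetricSpace Y]
    (Δ : ℝ≥0 → ℝ≥0 → ℝ≥0) (lam : ℝ≥0 → ℝ≥0∞) (z : (X × Y) × (X × Y)) : ℝ≥0∞ :=
  lam (Δ (nndist z.1.1 z.2.1) (nndist z.1.2 z.2.2))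

/-- The unbalanced Gromov--Wasserstein functional
`L(π) = ∬ λ(Γ) dπ dπ + D_φ(π₁⊗π₁|μ⊗μ) + D_φ(π₂⊗π₂|ν⊗ν)`. -/
def UGWfun {X Y : Type*} [MetricSpace X] [MetricSpace Y]
    [MeasurableSpace X] [MeasurableSpace Y]
    (Δ : ℝ≥0 → ℝ≥0 → ℝ≥0) (lam : ℝ≥0 → ℝ≥0∞) (φ : ℝ≥0 → ℝ≥0∞)
    (μ : Measure X) (ν : Measure Y) (π : Measure (X × Y)) : ℝ≥0∞ :=
  (∫⁻ z, gwCost Δ lam z ∂(π.prod π))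
    + csiszarDiv φ (π.fst.prod π.fst) (μ.prod μ)
    + csiszarDiv φ (π.snd.prod π.snd) (ν.prod ν)

lemma measurable_reverseEnt {φ : ℝ≥0 → ℝ≥0∞} (hφ : Measurable φ) :
    Measurable (reverseEnt φ) := by
  unfold reverseEnt
  exact Measurable.ite (by simpa using measurableSet_singleton (0 : ℝ≥0))
    measurable_const (measurable_coe_nnreal_ennreal.mul (hφ.comp measurable_inv))

lemma csiszar_duality {α : Type*} [MeasurableSpace α] {φ : ℝ≥0 → ℝ≥0∞} (hφm : Measurable φ)
    (σ τ : Measure α) [IsFiniteMeasure σ] [IsFiniteMeasure τ] :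
    csiszarDiv φ σ τ
      = (∫⁻ x, reverseEnt φ ((τ.rnDeriv σ x).toNNReal) ∂σ)
          + φ 0 * τ.singularPart σ Set.univ := by
  have hmστ : Measurable (σ.rnDeriv τ) := Measure.measurable_rnDeriv σ τ
  have hmτσ : Measurable (τ.rnDeriv σ) := Measure.measurable_rnDeriv τ σ
  have hBm : MeasurableSet {x | τ.rnDeriv σ x = 0} := hmτσ (measurableSet_singleton 0)
  have hPm : MeasurableSet {x | τ.rnDeriv σ x ≠ 0 ∧ τ.rnDeriv σ x ≠ ∞} :=
    (hmτσ (measurableSet_singleton 0)).compl.inter (hmτσ (measurableSet_singleton ∞)).compl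
  haveI hfτa : IsFiniteMeasure (σ.withDensity (τ.rnDeriv σ)) :=
    isFiniteMeasure_of_le τ (Measure.withDensity_rnDeriv_le τ σ)
  haveI hfac : IsFiniteMeasure (τ.withDensity (σ.rnDeriv τ)) :=
    isFiniteMeasure_of_le σ (Measure.withDensity_rnDeriv_le σ τ)
  have hτdec : τ = τ.singularPart σ + σ.withDensity (τ.rnDeriv σ) :=
    (τ.haveLebesgueDecomposition_add σ)
  have hτ2 : τ = σ.withDensity (τ.rnDeriv σ) + τ.singularPart σ :=
    hτdec.trans (add_comm _ _)
  have hσdec : σ = σ.singularPart τ + τ.withDensity (σ.rnDeriv τ) :=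
    (σ.haveLebesgueDecomposition_add τ)
  have hts : τ.singularPart σ ⟂ₘ σ := Measure.mutuallySingular_singularPart τ σ
  have hst : σ.singularPart τ ⟂ₘ τ := Measure.mutuallySingular_singularPart σ τ
  have hτa_ts : σ.withDensity (τ.rnDeriv σ) ⟂ₘ τ.singularPart σ :=
    hts.symm.mono_ac (withDensity_absolutelyContinuous σ _) Measure.AbsolutelyContinuous.rfl
  -- absolute continuity of σ restricted to P
  have hPac : σ.restrict {x | τ.rnDeriv σ x ≠ 0 ∧ τ.rnDeriv σ x ≠ ∞}
      ≪ σ.withDensity (τ.rnDeriv σ) := by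
    refine Measure.AbsolutelyContinuous.mk fun E hE hE0 => ?_
    rw [withDensity_apply _ hE] at hE0
    have h0 : ∀ᵐ x ∂σ, x ∈ E → τ.rnDeriv σ x = 0 := by
      rw [← ae_restrict_iff' hE]
      exact (lintegral_eq_zero_iff hmτσ).mp hE0
    rw [Measure.restrict_apply hE]
    have h0' : σ {x | ¬ (x ∈ E → τ.rnDeriv σ x = 0)} = 0 := ae_iff.mp h0
    refine measure_mono_null ?_ h0'
    intro x hx
    simp only [Set.mem_setOf_eq]
    exact fun hc => hx.2.1 (hc hx.1)
  have hPτ : σ.restrict {x | τ.rnDeriv σ x ≠ 0 ∧ τ.rnDeriv σ x ≠ ∞} ≪ τ :=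
    hPac.trans (Measure.absolutelyContinuous_of_le (Measure.withDensity_rnDeriv_le τ σ))
  -- inversion of the densities on P
  have hmul : (σ.withDensity (τ.rnDeriv σ)).rnDeriv σ * σ.rnDeriv τ
      =ᵐ[τ] (σ.withDensity (τ.rnDeriv σ)).rnDeriv τ :=
    Measure.rnDeriv_mul_rnDeriv (withDensity_absolutelyContinuous σ _)
  have hτaσ : (σ.withDensity (τ.rnDeriv σ)).rnDeriv σ =ᵐ[σ] τ.rnDeriv σ :=
    Measure.rnDeriv_withDensity σ hmτσ
  have hτaτ : (σ.withDensity (τ.rnDeriv σ)).rnDeriv τ =ᵐ[σ.withDensity (τ.rnDeriv σ)] 1 := by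
    have h2 := Measure.rnDeriv_add_right_of_mutuallySingular
      (μ := σ.withDensity (τ.rnDeriv σ)) (ν := σ.withDensity (τ.rnDeriv σ))
      (ν' := τ.singularPart σ) hτa_ts
    rw [← hτ2] at h2
    exact h2.trans (Measure.rnDeriv_self _)
  have hinv : ∀ᵐ x ∂σ, x ∈ {x | τ.rnDeriv σ x ≠ 0 ∧ τ.rnDeriv σ x ≠ ∞} → σ.rnDeriv τ x = (τ.rnDeriv σ x)⁻¹ := by
    rw [← ae_restrict_iff' hPm]
    filter_upwards [hPτ.ae_le hmul,
      (Measure.absolutelyContinuous_of_le Measure.restrict_le_self).ae_le hτaσ,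
      hPac.ae_le hτaτ, ae_restrict_mem hPm] with x h1 h2 h3 hxP
    simp only [Pi.mul_apply] at h1
    simp only [Pi.one_apply] at h3
    have key : τ.rnDeriv σ x * σ.rnDeriv τ x = 1 := by rw [← h2, h1]; exact h3
    calc σ.rnDeriv τ x = (τ.rnDeriv σ x)⁻¹ * (τ.rnDeriv σ x * σ.rnDeriv τ x) := by
          rw [← mul_assoc, ENNReal.inv_mul_cancel hxP.1 hxP.2, one_mul]
      _ = (τ.rnDeriv σ x)⁻¹ := by rw [key, mul_one]
  -- mass identity
  have htop : σ {x | τ.rnDeriv σ x = ∞} = 0 := by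
    have h := Measure.rnDeriv_lt_top τ σ
    rw [ae_iff] at h
    simpa only [not_lt, top_le_iff] using h
  have hτaB : σ.withDensity (τ.rnDeriv σ) {x | τ.rnDeriv σ x = 0} = 0 := by
    rw [withDensity_apply _ hBm,
      setLIntegral_congr_fun hBm (fun x (hx : τ.rnDeriv σ x = 0) => hx)]
    exact lintegral_zero
  have hτBN : τ ({x | τ.rnDeriv σ x = 0} ∩ hts.nullSet) = 0 := by
    refine le_antisymm ?_ (zero_le)
    calc τ ({x | τ.rnDeriv σ x = 0} ∩ hts.nullSet)
        = (τ.singularPart σ + σ.withDensity (τ.rnDeriv σ)) ({x | τ.rnDeriv σ x = 0} ∩ hts.nullSet) := by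
          rw [← hτdec]
      _ ≤ τ.singularPart σ hts.nullSet + σ.withDensity (τ.rnDeriv σ) {x | τ.rnDeriv σ x = 0} := by
          rw [Measure.add_apply]
          exact add_le_add (measure_mono Set.inter_subset_right) (measure_mono Set.inter_subset_left)
      _ = 0 := by rw [hts.measure_nullSet, hτaB, add_zero]
  have hacB : τ.withDensity (σ.rnDeriv τ) {x | τ.rnDeriv σ x = 0} = 0 := by
    have h1 : τ.withDensity (σ.rnDeriv τ) ({x | τ.rnDeriv σ x = 0} ∩ hts.nullSetᶜ) = 0 := by
      refine le_antisymm ?_ (zero_le)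
      calc τ.withDensity (σ.rnDeriv τ) ({x | τ.rnDeriv σ x = 0} ∩ hts.nullSetᶜ)
          ≤ σ hts.nullSetᶜ :=
            le_trans (measure_mono Set.inter_subset_right)
              (Measure.le_iff'.1 (Measure.withDensity_rnDeriv_le σ τ) _)
        _ = 0 := hts.measure_compl_nullSet
    have h2 : τ.withDensity (σ.rnDeriv τ) ({x | τ.rnDeriv σ x = 0} ∩ hts.nullSet) = 0 :=
      (withDensity_absolutelyContinuous τ (σ.rnDeriv τ)) hτBN
    refine le_antisymm ?_ (zero_le)
    calc τ.withDensity (σ.rnDeriv τ) {x | τ.rnDeriv σ x = 0}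
        = τ.withDensity (σ.rnDeriv τ)
            (({x | τ.rnDeriv σ x = 0} ∩ hts.nullSet) ∪ ({x | τ.rnDeriv σ x = 0} ∩ hts.nullSetᶜ)) := by
          rw [Set.inter_union_compl]
      _ ≤ _ + _ := measure_union_le _ _
      _ = 0 := by rw [h1, h2, add_zero]
  have hspP : σ.singularPart τ {x | τ.rnDeriv σ x ≠ 0 ∧ τ.rnDeriv σ x ≠ ∞} = 0 := by
    have h1 : σ.singularPart τ ({x | τ.rnDeriv σ x ≠ 0 ∧ τ.rnDeriv σ x ≠ ∞} ∩ hst.nullSet) = 0 :=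
      measure_mono_null Set.inter_subset_right hst.measure_nullSet
    have h2 : σ.singularPart τ ({x | τ.rnDeriv σ x ≠ 0 ∧ τ.rnDeriv σ x ≠ ∞} ∩ hst.nullSetᶜ) = 0 := by
      refine le_antisymm ?_ (zero_le)
      calc σ.singularPart τ ({x | τ.rnDeriv σ x ≠ 0 ∧ τ.rnDeriv σ x ≠ ∞} ∩ hst.nullSetᶜ)
          ≤ σ ({x | τ.rnDeriv σ x ≠ 0 ∧ τ.rnDeriv σ x ≠ ∞} ∩ hst.nullSetᶜ) :=
            Measure.le_iff'.1 (Measure.singularPart_le σ τ) _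
        _ = σ.restrict {x | τ.rnDeriv σ x ≠ 0 ∧ τ.rnDeriv σ x ≠ ∞} hst.nullSetᶜ := by
            rw [Measure.restrict_apply hst.measurableSet_nullSet.compl, Set.inter_comm]
        _ = 0 := hPτ hst.measure_compl_nullSet
    refine le_antisymm ?_ (zero_le)
    calc σ.singularPart τ {x | τ.rnDeriv σ x ≠ 0 ∧ τ.rnDeriv σ x ≠ ∞}
        ≤ _ + _ := by
          rw [← Set.inter_union_compl {x | τ.rnDeriv σ x ≠ 0 ∧ τ.rnDeriv σ x ≠ ∞} hst.nullSet]
          exact measure_union_le _ _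
      _ = 0 := by rw [h1, h2, add_zero]
  have hBc : {x | τ.rnDeriv σ x = 0}ᶜ
      ⊆ {x | τ.rnDeriv σ x ≠ 0 ∧ τ.rnDeriv σ x ≠ ∞} ∪ {x | τ.rnDeriv σ x = ∞} := by
    intro x hx
    by_cases hT : τ.rnDeriv σ x = ∞
    · exact Or.inr hT
    · exact Or.inl ⟨hx, hT⟩
  have hspBc : σ.singularPart τ {x | τ.rnDeriv σ x = 0}ᶜ = 0 := by
    refine le_antisymm ?_ (zero_le)
    calc σ.singularPart τ {x | τ.rnDeriv σ x = 0}ᶜ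
        ≤ σ.singularPart τ ({x | τ.rnDeriv σ x ≠ 0 ∧ τ.rnDeriv σ x ≠ ∞} ∪ {x | τ.rnDeriv σ x = ∞}) :=
          measure_mono hBc
      _ ≤ _ + _ := measure_union_le _ _
      _ ≤ 0 + σ {x | τ.rnDeriv σ x = ∞} := by
          rw [hspP]
          exact add_le_add le_rfl (Measure.le_iff'.1 (Measure.singularPart_le σ τ) _)
      _ = 0 := by rw [htop, zero_add]
  have hmass : σ {x | τ.rnDeriv σ x = 0} = σ.singularPart τ Set.univ := by
    have h1 : σ {x | τ.rnDeriv σ x = 0}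
        = σ.singularPart τ {x | τ.rnDeriv σ x = 0} := by
      calc σ {x | τ.rnDeriv σ x = 0}
          = (σ.singularPart τ + τ.withDensity (σ.rnDeriv τ)) {x | τ.rnDeriv σ x = 0} := by
            rw [← hσdec]
        _ = σ.singularPart τ {x | τ.rnDeriv σ x = 0} := by
            rw [Measure.add_apply, hacB, add_zero]
    have h2 := measure_add_measure_compl (μ := σ.singularPart τ) hBm
    rw [hspBc, add_zero] at h2
    rw [h1, h2]
  -- split the φ-integral over τ
  have hint1 : (∫⁻ x, φ (σ.rnDeriv τ x).toNNReal ∂τ)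
      = φ 0 * τ.singularPart σ Set.univ
        + ∫⁻ x, τ.rnDeriv σ x * φ (σ.rnDeriv τ x).toNNReal ∂σ := by
    have hz : σ.rnDeriv τ =ᵐ[τ.singularPart σ] 0 :=
      Measure.rnDeriv_eq_zero_of_mutuallySingular hts.symm
        (Measure.absolutelyContinuous_of_le (Measure.singularPart_le τ σ))
    have hz' : ∀ᵐ x ∂(τ.singularPart σ), φ (σ.rnDeriv τ x).toNNReal = φ 0 := by
      filter_upwards [hz] with x hx
      simp [hx]
    calc (∫⁻ x, φ (σ.rnDeriv τ x).toNNReal ∂τ)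
        = ∫⁻ x, φ (σ.rnDeriv τ x).toNNReal ∂(τ.singularPart σ + σ.withDensity (τ.rnDeriv σ)) := by
          rw [← hτdec]
      _ = (∫⁻ x, φ (σ.rnDeriv τ x).toNNReal ∂(τ.singularPart σ))
            + ∫⁻ x, φ (σ.rnDeriv τ x).toNNReal ∂(σ.withDensity (τ.rnDeriv σ)) :=
          lintegral_add_measure _ _ _
      _ = φ 0 * τ.singularPart σ Set.univ
            + ∫⁻ x, τ.rnDeriv σ x * φ (σ.rnDeriv τ x).toNNReal ∂σ := by
          congr 1
          · rw [lintegral_congr_ae hz', lintegral_const]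
          · have hgm : Measurable fun x => φ (σ.rnDeriv τ x).toNNReal :=
              hφm.comp hmστ.ennreal_toNNReal
            rw [lintegral_withDensity_eq_lintegral_mul σ hmτσ hgm]
            rfl
  -- rewrite the reverse-entropy integral
  have hkey : ∀ᵐ x ∂σ, reverseEnt φ ((τ.rnDeriv σ x).toNNReal)
      = τ.rnDeriv σ x * φ (σ.rnDeriv τ x).toNNReal
        + Set.indicator {x | τ.rnDeriv σ x = 0} (fun _ => recessionConst φ) x := by
    have hfin : ∀ᵐ x ∂σ, τ.rnDeriv σ x ≠ ∞ :=
      (Measure.rnDeriv_lt_top τ σ).mono fun x hx => hx.ne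
    filter_upwards [hfin, hinv] with x hfinx hinvx
    by_cases h0 : τ.rnDeriv σ x = 0
    · have hmem : x ∈ {y | τ.rnDeriv σ y = 0} := h0
      rw [Set.indicator_of_mem hmem]
      simp [reverseEnt, h0]
    · have hnmem : x ∉ {y | τ.rnDeriv σ y = 0} := h0
      rw [Set.indicator_of_notMem hnmem, add_zero]
      have ht0 : (τ.rnDeriv σ x).toNNReal ≠ 0 := by
        simp [ENNReal.toNNReal_eq_zero_iff, h0, hfinx]
      rw [reverseEnt, if_neg ht0, ENNReal.coe_toNNReal hfinx, hinvx ⟨h0, hfinx⟩,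
        ENNReal.toNNReal_inv]
  have hint2 : (∫⁻ x, reverseEnt φ ((τ.rnDeriv σ x).toNNReal) ∂σ)
      = (∫⁻ x, τ.rnDeriv σ x * φ (σ.rnDeriv τ x).toNNReal ∂σ)
        + recessionConst φ * σ.singularPart τ Set.univ := by
    rw [lintegral_congr_ae hkey,
      lintegral_add_right _ (measurable_const.indicator hBm),
      lintegral_indicator_const hBm, hmass]
  rw [csiszarDiv, hint1, hint2]
  ring


lemma rnDeriv_prod_self {α : Type*} [MeasurableSpace α] (μ ρ : Measure α)
    [IsFiniteMeasure μ] [IsFiniteMeasure ρ] :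
    (fun p : α × α => μ.rnDeriv ρ p.1 * μ.rnDeriv ρ p.2)
      =ᵐ[ρ.prod ρ] (μ.prod μ).rnDeriv (ρ.prod ρ) := by
  have hf : Measurable (μ.rnDeriv ρ) := Measure.measurable_rnDeriv μ ρ
  haveI h1 : IsFiniteMeasure (ρ.withDensity (μ.rnDeriv ρ)) :=
    isFiniteMeasure_of_le μ (Measure.withDensity_rnDeriv_le μ ρ)
  have hwd : (ρ.withDensity (μ.rnDeriv ρ)).prod (ρ.withDensity (μ.rnDeriv ρ))
      = (ρ.prod ρ).withDensity (fun p => μ.rnDeriv ρ p.1 * μ.rnDeriv ρ p.2) := by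
    refine Measure.prod_eq fun s t hs ht => ?_
    rw [withDensity_apply _ (hs.prod ht), ← Measure.prod_restrict,
      lintegral_prod_mul hf.aemeasurable hf.aemeasurable,
      withDensity_apply _ hs, withDensity_apply _ ht]
  have hsp : μ.singularPart ρ ⟂ₘ ρ := Measure.mutuallySingular_singularPart μ ρ
  have hsingL : ∀ (m : Measure α) [SFinite m], (μ.singularPart ρ).prod m ⟂ₘ ρ.prod ρ := by
    intro m _
    refine ⟨hsp.nullSet ×ˢ Set.univ, hsp.measurableSet_nullSet.prod MeasurableSet.univ, ?_, ?_⟩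
    · rw [Measure.prod_prod, hsp.measure_nullSet, zero_mul]
    · have hc : (hsp.nullSet ×ˢ (Set.univ : Set α))ᶜ = hsp.nullSetᶜ ×ˢ Set.univ := by
        ext p; simp
      rw [hc, Measure.prod_prod, hsp.measure_compl_nullSet, zero_mul]
  have hsingR : ∀ (m : Measure α) [SFinite m], m.prod (μ.singularPart ρ) ⟂ₘ ρ.prod ρ := by
    intro m _
    refine ⟨Set.univ ×ˢ hsp.nullSet, MeasurableSet.univ.prod hsp.measurableSet_nullSet, ?_, ?_⟩
    · rw [Measure.prod_prod, hsp.measure_nullSet, mul_zero]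
    · have hc : ((Set.univ : Set α) ×ˢ hsp.nullSet)ᶜ = Set.univ ×ˢ hsp.nullSetᶜ := by
        ext p; simp
      rw [hc, Measure.prod_prod, hsp.measure_compl_nullSet, mul_zero]
  have hμ : μ = μ.singularPart ρ + ρ.withDensity (μ.rnDeriv ρ) :=
    μ.haveLebesgueDecomposition_add ρ
  have hprod : μ.prod μ
      = ((μ.singularPart ρ).prod (μ.singularPart ρ)
          + (μ.singularPart ρ).prod (ρ.withDensity (μ.rnDeriv ρ))
          + (ρ.withDensity (μ.rnDeriv ρ)).prod (μ.singularPart ρ))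
        + (ρ.prod ρ).withDensity (fun p => μ.rnDeriv ρ p.1 * μ.rnDeriv ρ p.2) := by
    conv_lhs => rw [hμ]
    rw [Measure.add_prod, Measure.prod_add, Measure.prod_add, hwd]
    abel
  have hsing : ((μ.singularPart ρ).prod (μ.singularPart ρ)
      + (μ.singularPart ρ).prod (ρ.withDensity (μ.rnDeriv ρ))
      + (ρ.withDensity (μ.rnDeriv ρ)).prod (μ.singularPart ρ)) ⟂ₘ ρ.prod ρ :=
    ((hsingL _).add_left (hsingL _)).add_left (hsingR _)
  exact Measure.eq_rnDeriv ((hf.comp measurable_fst).mul (hf.comp measurable_snd)) hsing hprod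

lemma lintegral_fst_prod_fst {X Y : Type*} [MeasurableSpace X] [MeasurableSpace Y]
    (π : Measure (X × Y)) [IsFiniteMeasure π] {H : X × X → ℝ≥0∞} (hH : Measurable H) :
    ∫⁻ p, H p ∂(π.fst.prod π.fst) = ∫⁻ z, H (z.1.1, z.2.1) ∂(π.prod π) := by
  have h1 : π.fst = π.map Prod.fst := rfl
  rw [h1, Measure.map_prod_map _ _ measurable_fst measurable_fst,
    lintegral_map hH (measurable_fst.prodMap measurable_fst)]
  rfl

lemma lintegral_snd_prod_snd {X Y : Type*} [MeasurableSpace X] [MeasurableSpace Y]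
    (π : Measure (X × Y)) [IsFiniteMeasure π] {H : Y × Y → ℝ≥0∞} (hH : Measurable H) :
    ∫⁻ p, H p ∂(π.snd.prod π.snd) = ∫⁻ z, H (z.1.2, z.2.2) ∂(π.prod π) := by
  have h1 : π.snd = π.map Prod.snd := rfl
  rw [h1, Measure.map_prod_map _ _ measurable_snd measurable_snd,
    lintegral_map hH (measurable_snd.prodMap measurable_snd)]
  rfl


/-- Rewriting of the UGW functional using the reverse entropy:
with `f = dμ/dπ₁`, `g = dν/dπ₂` the densities of the Lebesgue decompositions
`μ = f·π₁ + μ⊥`, `ν = g·π₂ + ν⊥`, one has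
`L(π) = ∬ L_{λ(Γ)}(f(x)f(x'), g(y)g(y')) dπ dπ + ψ'_∞·(|(μ⊗μ)⊥| + |(ν⊗ν)⊥|)`,
where `ψ'_∞ = φ(0)` and the orthogonal parts are taken w.r.t. `π₁⊗π₁` and `π₂⊗π₂`. -/
theorem ugw_functional_rewrite
    {X Y : Type*} [MetricSpace X] [CompleteSpace X] [TopologicalSpace.SeparableSpace X]
    [MeasurableSpace X] [BorelSpace X]
    [MetricSpace Y] [CompleteSpace Y] [TopologicalSpace.SeparableSpace Y]
    [MeasurableSpace Y] [BorelSpace Y]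
    (μ : Measure X) (ν : Measure Y) [IsFiniteMeasure μ] [IsFiniteMeasure ν]
    (Δ : ℝ≥0 → ℝ≥0 → ℝ≥0)
    (hΔsymm : ∀ a b, Δ a b = Δ b a) (hΔself : ∀ a, Δ a a = 0)
    (hΔdef : ∀ a b, Δ a b = 0 → a = b)
    (hΔtri : ∀ a b c, Δ a c ≤ Δ a b + Δ b c)
    (lam : ℝ≥0 → ℝ≥0∞) (φ : ℝ≥0 → ℝ≥0∞) (hφ : IsEntropy φ)
    (π : Measure (X × Y)) [IsFiniteMeasure π] :
    UGWfun Δ lam φ μ ν π =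
      (∫⁻ z, Lcost φ (gwCost Δ lam z)
          ((μ.rnDeriv π.fst z.1.1).toNNReal * (μ.rnDeriv π.fst z.2.1).toNNReal)
          ((ν.rnDeriv π.snd z.1.2).toNNReal * (ν.rnDeriv π.snd z.2.2).toNNReal)
          ∂(π.prod π))
        + φ 0 * ((μ.prod μ).singularPart (π.fst.prod π.fst) Set.univ
            + (ν.prod ν).singularPart (π.snd.prod π.snd) Set.univ) := by
  have hφm : Measurable φ := hφ.2.1.measurable
  have hf : Measurable (μ.rnDeriv π.fst) := Measure.measurable_rnDeriv _ _
  have hg : Measurable (ν.rnDeriv π.snd) := Measure.measurable_rnDeriv _ _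
  have hAm : Measurable fun z : (X × Y) × (X × Y) =>
      reverseEnt φ ((μ.rnDeriv π.fst z.1.1).toNNReal * (μ.rnDeriv π.fst z.2.1).toNNReal) :=
    (measurable_reverseEnt hφm).comp
      (((hf.comp (measurable_fst.comp measurable_fst)).ennreal_toNNReal).mul
        ((hf.comp (measurable_fst.comp measurable_snd)).ennreal_toNNReal))
  have hBm : Measurable fun z : (X × Y) × (X × Y) =>
      reverseEnt φ ((ν.rnDeriv π.snd z.1.2).toNNReal * (ν.rnDeriv π.snd z.2.2).toNNReal) :=
    (measurable_reverseEnt hφm).comp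
      (((hg.comp (measurable_snd.comp measurable_fst)).ennreal_toNNReal).mul
        ((hg.comp (measurable_snd.comp measurable_snd)).ennreal_toNNReal))
  have HAm : Measurable fun p : X × X =>
      reverseEnt φ ((μ.rnDeriv π.fst p.1).toNNReal * (μ.rnDeriv π.fst p.2).toNNReal) :=
    (measurable_reverseEnt hφm).comp
      (((hf.comp measurable_fst).ennreal_toNNReal).mul
        ((hf.comp measurable_snd).ennreal_toNNReal))
  have HBm : Measurable fun p : Y × Y =>
      reverseEnt φ ((ν.rnDeriv π.snd p.1).toNNReal * (ν.rnDeriv π.snd p.2).toNNReal) :=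
    (measurable_reverseEnt hφm).comp
      (((hg.comp measurable_fst).ennreal_toNNReal).mul
        ((hg.comp measurable_snd).ennreal_toNNReal))
  have hD1 : csiszarDiv φ (π.fst.prod π.fst) (μ.prod μ)
      = (∫⁻ z, reverseEnt φ
          ((μ.rnDeriv π.fst z.1.1).toNNReal * (μ.rnDeriv π.fst z.2.1).toNNReal) ∂(π.prod π))
        + φ 0 * (μ.prod μ).singularPart (π.fst.prod π.fst) Set.univ := by
    rw [csiszar_duality hφm]
    congr 1
    have h1 : (∫⁻ p, reverseEnt φ
          (((μ.prod μ).rnDeriv (π.fst.prod π.fst) p).toNNReal) ∂(π.fst.prod π.fst))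
        = ∫⁻ p, reverseEnt φ
            ((μ.rnDeriv π.fst p.1).toNNReal * (μ.rnDeriv π.fst p.2).toNNReal)
            ∂(π.fst.prod π.fst) := by
      refine lintegral_congr_ae ?_
      filter_upwards [rnDeriv_prod_self μ π.fst] with p hp
      rw [← hp, ENNReal.toNNReal_mul]
    rw [h1]
    exact lintegral_fst_prod_fst π HAm
  have hD2 : csiszarDiv φ (π.snd.prod π.snd) (ν.prod ν)
      = (∫⁻ z, reverseEnt φ
          ((ν.rnDeriv π.snd z.1.2).toNNReal * (ν.rnDeriv π.snd z.2.2).toNNReal) ∂(π.prod π))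
        + φ 0 * (ν.prod ν).singularPart (π.snd.prod π.snd) Set.univ := by
    rw [csiszar_duality hφm]
    congr 1
    have h1 : (∫⁻ p, reverseEnt φ
          (((ν.prod ν).rnDeriv (π.snd.prod π.snd) p).toNNReal) ∂(π.snd.prod π.snd))
        = ∫⁻ p, reverseEnt φ
            ((ν.rnDeriv π.snd p.1).toNNReal * (ν.rnDeriv π.snd p.2).toNNReal)
            ∂(π.snd.prod π.snd) := by
      refine lintegral_congr_ae ?_
      filter_upwards [rnDeriv_prod_self ν π.snd] with p hp
      rw [← hp, ENNReal.toNNReal_mul]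
    rw [h1]
    exact lintegral_snd_prod_snd π HBm
  have hsplit : (∫⁻ z, Lcost φ (gwCost Δ lam z)
        ((μ.rnDeriv π.fst z.1.1).toNNReal * (μ.rnDeriv π.fst z.2.1).toNNReal)
        ((ν.rnDeriv π.snd z.1.2).toNNReal * (ν.rnDeriv π.snd z.2.2).toNNReal)
        ∂(π.prod π))
      = (∫⁻ z, gwCost Δ lam z ∂(π.prod π))
        + (∫⁻ z, reverseEnt φ
            ((μ.rnDeriv π.fst z.1.1).toNNReal * (μ.rnDeriv π.fst z.2.1).toNNReal) ∂(π.prod π))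
        + ∫⁻ z, reverseEnt φ
            ((ν.rnDeriv π.snd z.1.2).toNNReal * (ν.rnDeriv π.snd z.2.2).toNNReal) ∂(π.prod π) := by
    simp only [Lcost]
    rw [lintegral_add_right _ hBm, lintegral_add_right _ hAm]
  simp only [UGWfun]
  rw [hD1, hD2, hsplit]
  ring


end
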